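/- Let γ be a complex number with |γ| ≤ 4/5^{5/4}. Then the series x = ∑_{t=0}^∞ A_t(5,1) γ^{4t+1} converges absolutely and its sum x satisfies the Bring–Jerrard quintic equation x^5 - x + γ = 0. -/

import Mathlib

open Nat (factorial)
open scoped Nat

noncomputable def cc (r n : ℕ) : ℝ :=
  if r = 0 then (if n = 0 then 1 else 0)
  else r * ((5 * n + r).choose n) / (5 * n + r)

lemma cc_pos_formula (r n : ℕ) (h : r ≠ 0 ∨ n ≠ 0) :
    cc r n = r * ((5 * n + r).choose n) / (5 * n + r) := by
  unfold cc; split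
  · rcases h with h | h
    · omega
    · subst ‹r = 0›; rw [if_neg h]; simp
  · rfl

lemma cc_nonneg (r n : ℕ) : 0 ≤ cc r n := by
  unfold cc; split
  · split <;> norm_num
  · positivity

lemma cc_zero_right (r : ℕ) : cc r 0 = 1 := by
  unfold cc; split
  · simp
  · rename_i h
    rw [mul_zero, zero_add, Nat.choose_zero_right]
    have : (r : ℝ) ≠ 0 := Nat.cast_ne_zero.2 h
    field_simp
    simp

lemma cc_zero_succ (n : ℕ) : cc 0 (n + 1) = 0 := by simp [cc]

lemma cc_pascal (r n : ℕ) : cc (r + 1) (n + 1) = cc r (n + 1) + cc (r + 5) n := by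
  have e1 := cc_pos_formula (r + 1) (n + 1) (Or.inl (by omega))
  have e2 := cc_pos_formula r (n + 1) (Or.inr (by omega))
  have e3 := cc_pos_formula (r + 5) n (Or.inl (by omega))
  have a1 : 5 * (n + 1) + (r + 1) = (5 * n + r + 5) + 1 := by omega
  have a2 : 5 * (n + 1) + r = 5 * n + r + 5 := by omega
  have a3 : 5 * n + (r + 5) = 5 * n + r + 5 := by omega
  rw [e1, e2, e3, a1, a2, a3]
  have key : ((5 * n + r + 5).choose (n + 1) : ℝ) * (n + 1)
      = (5 * n + r + 5).choose n * (4 * n + r + 5) := by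
    have h1 : (5 * n + r + 5).choose (n + 1) * (n + 1)
        = (5 * n + r + 5).choose n * ((5 * n + r + 5) - n) := Nat.choose_succ_right_eq _ n
    have h2 : (5 * n + r + 5) - n = 4 * n + r + 5 := by omega
    rw [h2] at h1
    exact_mod_cast congrArg (Nat.cast : ℕ → ℝ) h1
  have pas : (((5 * n + r + 5) + 1).choose (n + 1) : ℝ)
      = (5 * n + r + 5).choose n + (5 * n + r + 5).choose (n + 1) := by
    exact_mod_cast congrArg (Nat.cast : ℕ → ℝ) (Nat.choose_succ_succ (5 * n + r + 5) n)
  have hM0 : ((5 * n + r + 5 : ℕ) : ℝ) ≠ 0 := by positivity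
  have hM1 : (((5 * n + r + 5) + 1 : ℕ) : ℝ) ≠ 0 := by positivity
  push_cast
  rw [div_add_div _ _ (by positivity : (5 * ((n:ℝ) + 1) + (r:ℝ)) ≠ 0)
      (by positivity : (5 * (n:ℝ) + ((r:ℝ) + 5)) ≠ 0),
    div_eq_div_iff (by positivity) (by positivity)]
  linear_combination ((5 * (n:ℝ) + r + 5) * (5 * (n:ℝ) + r + 5) * ((r:ℝ) + 1)) * pas
    + (5 * (5 * (n:ℝ) + r + 5)) * key

lemma cc_conv : ∀ m r s : ℕ,
    ∑ j ∈ Finset.range (m + 1), cc r j * cc s (m - j) = cc (r + s) m := by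
  intro m
  induction m using Nat.strong_induction_on with
  | _ m ih =>
    intro r s
    induction r with
    | zero =>
      rw [Finset.sum_eq_single 0]
      · simp [cc_zero_right, cc_zero_right 0]  -- cc 0 0 = 1
      · intro j _ hj
        obtain ⟨i, rfl⟩ := Nat.exists_eq_succ_of_ne_zero hj
        rw [cc_zero_succ, zero_mul]
      · intro h; exact absurd (Finset.mem_range.2 (by omega)) h
    | succ r ihr =>
      cases m with
      | zero => simp [cc_zero_right]
      | succ mm =>
        rw [Finset.sum_range_succ']
        have step : ∀ i ∈ Finset.range (mm + 1),
            cc (r + 1) (i + 1) * cc s (mm + 1 - (i + 1))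
              = cc r (i + 1) * cc s (mm - i) + cc (r + 5) i * cc s (mm - i) := by
          intro i _
          have : mm + 1 - (i + 1) = mm - i := by omega
          rw [this, cc_pascal, add_mul]
        rw [Finset.sum_congr rfl step, Finset.sum_add_distrib]
        have h5 : ∑ i ∈ Finset.range (mm + 1), cc (r + 5) i * cc s (mm - i)
            = cc (r + 5 + s) mm := ih mm (by omega) (r + 5) s
        rw [Finset.sum_range_succ'] at ihr
        have e : ∑ i ∈ Finset.range (mm + 1), cc r (i + 1) * cc s (mm + 1 - (i + 1))
            = ∑ i ∈ Finset.range (mm + 1), cc r (i + 1) * cc s (mm - i) :=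
          Finset.sum_congr rfl (fun i _ => by
            rw [show mm + 1 - (i + 1) = mm - i from by omega])
        rw [e, cc_zero_right, one_mul] at ihr
        have goal2 : cc (r + s) (mm + 1) + cc (r + 5 + s) mm
            = cc (r + 1 + s) (mm + 1) := by
          have := cc_pascal (r + s) mm
          have e : r + s + 5 = r + 5 + s := by omega
          rw [e] at this
          rw [← this, show r + s + 1 = r + 1 + s from by omega]
        rw [h5, cc_zero_right, one_mul]
        linarith [ihr, goal2]

lemma cc_ratio (t : ℕ) :
    cc 1 (t + 1) * (((t : ℝ) + 1) * (4 * t + 2) * (4 * t + 3) * (4 * t + 4) * (4 * t + 5))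
      = cc 1 t * ((5 * (t : ℝ) + 1) * (5 * t + 2) * (5 * t + 3) * (5 * t + 4) * (5 * t + 5)) := by
  rw [cc_pos_formula 1 (t + 1) (Or.inl one_ne_zero), cc_pos_formula 1 t (Or.inl one_ne_zero)]
  rw [Nat.cast_choose ℝ (show t + 1 ≤ 5 * (t + 1) + 1 by omega),
      Nat.cast_choose ℝ (show t ≤ 5 * t + 1 by omega)]
  have s1 : 5 * (t + 1) + 1 - (t + 1) = 4 * t + 5 := by omega
  have s2 : 5 * t + 1 - t = 4 * t + 1 := by omega
  rw [s1, s2]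
  have f1 : (5 * (t + 1) + 1)! = (5*t+6) * ((5*t+5) * ((5*t+4) * ((5*t+3) * ((5*t+2) * (5*t+1)!)))) := by
    rw [show 5 * (t + 1) + 1 = (5*t+5)+1 from by omega, Nat.factorial_succ,
        show 5*t+5 = (5*t+4)+1 from by omega, Nat.factorial_succ,
        show 5*t+4 = (5*t+3)+1 from by omega, Nat.factorial_succ,
        show 5*t+3 = (5*t+2)+1 from by omega, Nat.factorial_succ,
        show 5*t+2 = (5*t+1)+1 from by omega, Nat.factorial_succ]
  have f2 : (t + 1)! = (t + 1) * t ! := Nat.factorial_succ t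
  have f3 : (4*t+5)! = (4*t+5) * ((4*t+4) * ((4*t+3) * ((4*t+2) * (4*t+1)!))) := by
    rw [show 4*t+5 = (4*t+4)+1 from by omega, Nat.factorial_succ,
        show 4*t+4 = (4*t+3)+1 from by omega, Nat.factorial_succ,
        show 4*t+3 = (4*t+2)+1 from by omega, Nat.factorial_succ,
        show 4*t+2 = (4*t+1)+1 from by omega, Nat.factorial_succ]
  rw [f1, f2, f3]
  push_cast
  have h1 : ((5*t+1)! : ℝ) ≠ 0 := by positivity
  have h2 : ((4*t+1)! : ℝ) ≠ 0 := by positivity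
  have h3 : ((t)! : ℝ) ≠ 0 := by positivity
  field_simp
  ring

lemma cc_sq_bound (s : ℝ) (hs0 : 0 ≤ s) (hs : s ≤ 256 / 3125) :
    ∀ t : ℕ, (cc 1 t * s ^ t) ^ 2 * ((t : ℝ) + 1) ^ 3 ≤ 1 := by
  intro t
  induction t with
  | zero => rw [cc_zero_right]; norm_num
  | succ t ih =>
    have key : (cc 1 (t + 1) * s ^ (t + 1)) ^ 2 * ((t : ℝ) + 2) ^ 3
        ≤ (cc 1 t * s ^ t) ^ 2 * ((t : ℝ) + 1) ^ 3 := by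
      have hr := cc_ratio t
      set A := cc 1 (t + 1) with hA
      set B := cc 1 t with hB
      have hQ : (0 : ℝ) < ((t : ℝ) + 1) * (4 * t + 2) * (4 * t + 3) * (4 * t + 4) * (4 * t + 5) := by
        positivity
      have hAn : 0 ≤ A := cc_nonneg 1 (t + 1)
      have hBn : 0 ≤ B := cc_nonneg 1 t
      have hsn : 0 ≤ s ^ t := pow_nonneg hs0 t
      -- polynomial inequality (nonnegative coefficients in the difference)
      have hpoly : (256 / 3125 : ℝ) ^ 2
            * ((5 * (t : ℝ) + 1) * (5 * t + 2) * (5 * t + 3) * (5 * t + 4) * (5 * t + 5)) ^ 2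
            * ((t : ℝ) + 2) ^ 3
          ≤ (((t : ℝ) + 1) * (4 * t + 2) * (4 * t + 3) * (4 * t + 4) * (4 * t + 5)) ^ 2
            * ((t : ℝ) + 1) ^ 3 := by
        have ht : (0 : ℝ) ≤ (t : ℝ) := Nat.cast_nonneg t
        nlinarith [pow_nonneg ht 2, pow_nonneg ht 3, pow_nonneg ht 4, pow_nonneg ht 5,
          pow_nonneg ht 6, pow_nonneg ht 7, pow_nonneg ht 8, pow_nonneg ht 9,
          pow_nonneg ht 10, pow_nonneg ht 11, pow_nonneg ht 12, pow_nonneg ht 13]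
      have hs2 : s ^ 2 ≤ (256 / 3125 : ℝ) ^ 2 := by nlinarith
      -- (A * s^(t+1))^2 (t+2)^3 * Q^2  ≤  (B * s^t)^2 (t+1)^3 * Q^2
      have expand : (A * s ^ (t + 1)) ^ 2 * ((t : ℝ) + 2) ^ 3
            * (((t : ℝ) + 1) * (4 * t + 2) * (4 * t + 3) * (4 * t + 4) * (4 * t + 5)) ^ 2
          = (B * s ^ t) ^ 2 * (s ^ 2
            * ((5 * (t : ℝ) + 1) * (5 * t + 2) * (5 * t + 3) * (5 * t + 4) * (5 * t + 5)) ^ 2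
            * ((t : ℝ) + 2) ^ 3) := by
        have : A * (((t : ℝ) + 1) * (4 * t + 2) * (4 * t + 3) * (4 * t + 4) * (4 * t + 5))
            = B * ((5 * (t : ℝ) + 1) * (5 * t + 2) * (5 * t + 3) * (5 * t + 4) * (5 * t + 5)) := hr
        calc (A * s ^ (t + 1)) ^ 2 * ((t : ℝ) + 2) ^ 3
              * (((t : ℝ) + 1) * (4 * t + 2) * (4 * t + 3) * (4 * t + 4) * (4 * t + 5)) ^ 2
            = (A * (((t : ℝ) + 1) * (4 * t + 2) * (4 * t + 3) * (4 * t + 4) * (4 * t + 5))) ^ 2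
              * (s ^ (t + 1)) ^ 2 * ((t : ℝ) + 2) ^ 3 := by ring
          _ = (B * ((5 * (t : ℝ) + 1) * (5 * t + 2) * (5 * t + 3) * (5 * t + 4) * (5 * t + 5))) ^ 2
              * (s ^ (t + 1)) ^ 2 * ((t : ℝ) + 2) ^ 3 := by rw [this]
          _ = (B * s ^ t) ^ 2 * (s ^ 2
              * ((5 * (t : ℝ) + 1) * (5 * t + 2) * (5 * t + 3) * (5 * t + 4) * (5 * t + 5)) ^ 2
              * ((t : ℝ) + 2) ^ 3) := by ring
      have final : (A * s ^ (t + 1)) ^ 2 * ((t : ℝ) + 2) ^ 3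
            * (((t : ℝ) + 1) * (4 * t + 2) * (4 * t + 3) * (4 * t + 4) * (4 * t + 5)) ^ 2
          ≤ (B * s ^ t) ^ 2 * ((t : ℝ) + 1) ^ 3
            * (((t : ℝ) + 1) * (4 * t + 2) * (4 * t + 3) * (4 * t + 4) * (4 * t + 5)) ^ 2 := by
        rw [expand]
        have hBs : 0 ≤ (B * s ^ t) ^ 2 := sq_nonneg _
        have h1 : s ^ 2 * ((5 * (t : ℝ) + 1) * (5 * t + 2) * (5 * t + 3) * (5 * t + 4) * (5 * t + 5)) ^ 2
              * ((t : ℝ) + 2) ^ 3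
            ≤ ((t : ℝ) + 1) ^ 3
              * (((t : ℝ) + 1) * (4 * t + 2) * (4 * t + 3) * (4 * t + 4) * (4 * t + 5)) ^ 2 := by
          calc s ^ 2 * ((5 * (t : ℝ) + 1) * (5 * t + 2) * (5 * t + 3) * (5 * t + 4) * (5 * t + 5)) ^ 2
                * ((t : ℝ) + 2) ^ 3
              ≤ (256 / 3125 : ℝ) ^ 2 * ((5 * (t : ℝ) + 1) * (5 * t + 2) * (5 * t + 3) * (5 * t + 4) * (5 * t + 5)) ^ 2
                * ((t : ℝ) + 2) ^ 3 := by
                have hnn : (0:ℝ) ≤ ((5 * (t : ℝ) + 1) * (5 * t + 2) * (5 * t + 3) * (5 * t + 4) * (5 * t + 5)) ^ 2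
                    * ((t : ℝ) + 2) ^ 3 := by positivity
                nlinarith [hnn]
            _ ≤ (((t : ℝ) + 1) * (4 * t + 2) * (4 * t + 3) * (4 * t + 4) * (4 * t + 5)) ^ 2
                * ((t : ℝ) + 1) ^ 3 := hpoly
            _ = ((t : ℝ) + 1) ^ 3
                * (((t : ℝ) + 1) * (4 * t + 2) * (4 * t + 3) * (4 * t + 4) * (4 * t + 5)) ^ 2 := by ring
        calc (B * s ^ t) ^ 2 * (s ^ 2
              * ((5 * (t : ℝ) + 1) * (5 * t + 2) * (5 * t + 3) * (5 * t + 4) * (5 * t + 5)) ^ 2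
              * ((t : ℝ) + 2) ^ 3)
            ≤ (B * s ^ t) ^ 2 * (((t : ℝ) + 1) ^ 3
              * (((t : ℝ) + 1) * (4 * t + 2) * (4 * t + 3) * (4 * t + 4) * (4 * t + 5)) ^ 2) :=
              mul_le_mul_of_nonneg_left h1 hBs
          _ = (B * s ^ t) ^ 2 * ((t : ℝ) + 1) ^ 3
              * (((t : ℝ) + 1) * (4 * t + 2) * (4 * t + 3) * (4 * t + 4) * (4 * t + 5)) ^ 2 := by ring
      have := le_of_mul_le_mul_right (by
        calc (A * s ^ (t + 1)) ^ 2 * ((t : ℝ) + 2) ^ 3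
            * (((t : ℝ) + 1) * (4 * t + 2) * (4 * t + 3) * (4 * t + 4) * (4 * t + 5)) ^ 2
            ≤ _ := final) (by positivity : (0:ℝ) < (((t : ℝ) + 1) * (4 * t + 2) * (4 * t + 3) * (4 * t + 4) * (4 * t + 5)) ^ 2)
      exact this
    have hc : ((t + 1 : ℕ) : ℝ) + 1 = (t : ℝ) + 2 := by push_cast; ring
    rw [hc]; exact le_trans key ih

lemma cc_term_le (s : ℝ) (hs0 : 0 ≤ s) (hs : s ≤ 256 / 3125) (t : ℕ) :
    cc 1 t * s ^ t ≤ 1 / Real.sqrt (((t : ℝ) + 1) ^ 3) := by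
  have h := cc_sq_bound s hs0 hs t
  have hpos : (0 : ℝ) < ((t : ℝ) + 1) ^ 3 := by positivity
  have h2 : (cc 1 t * s ^ t) ^ 2 ≤ 1 / ((t : ℝ) + 1) ^ 3 := by
    rw [le_div_iff₀ hpos]; linarith
  have hnn : 0 ≤ cc 1 t * s ^ t := mul_nonneg (cc_nonneg 1 t) (pow_nonneg hs0 t)
  calc cc 1 t * s ^ t = Real.sqrt ((cc 1 t * s ^ t) ^ 2) := (Real.sqrt_sq hnn).symm
    _ ≤ Real.sqrt (1 / ((t : ℝ) + 1) ^ 3) := Real.sqrt_le_sqrt h2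
    _ = 1 / Real.sqrt (((t : ℝ) + 1) ^ 3) := by
        rw [one_div, one_div, Real.sqrt_inv]

lemma summable_majorant : Summable (fun t : ℕ => 1 / Real.sqrt (((t : ℝ) + 1) ^ 3)) := by
  have base : Summable (fun n : ℕ => 1 / (n : ℝ) ^ ((3 : ℝ) / 2)) :=
    Real.summable_one_div_nat_rpow.2 (by norm_num)
  have shifted : Summable (fun n : ℕ => 1 / ((n + 1 : ℕ) : ℝ) ^ ((3 : ℝ) / 2)) :=
    (summable_nat_add_iff 1).2 base
  refine shifted.congr fun t => ?_
  have h1 : (((t + 1 : ℕ) : ℝ)) = (t : ℝ) + 1 := by push_cast; ring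
  rw [h1]
  congr 1
  have hpos : (0 : ℝ) ≤ (t : ℝ) + 1 := by positivity
  rw [show ((3 : ℝ) / 2) = (3 : ℝ) * (1 / 2) by norm_num, Real.rpow_mul hpos,
    Real.sqrt_eq_rpow, ← Real.rpow_natCast ((t : ℝ) + 1) 3]
  norm_num

lemma geom_summable (s : ℝ) (hs0 : 0 ≤ s) (hs : s ≤ 256 / 3125) :
    Summable (fun t : ℕ => cc 1 t * s ^ t) :=
  Summable.of_nonneg_of_le
    (fun t => mul_nonneg (cc_nonneg 1 t) (pow_nonneg hs0 t))
    (cc_term_le s hs0 hs) summable_majorant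

lemma abs_term (r n : ℕ) (z : ℂ) : ‖(cc r n : ℂ) * z ^ n‖ = cc r n * ‖z‖ ^ n := by
  rw [norm_mul, norm_pow, Complex.norm_real, Real.norm_eq_abs,
    abs_of_nonneg (cc_nonneg r n)]

lemma pow_tsum (z : ℂ) (hz : Summable fun t : ℕ => cc 1 t * ‖z‖ ^ t) :
    ∀ r : ℕ, (Summable fun n : ℕ => ‖(cc (r + 1) n : ℂ) * z ^ n‖) ∧
      (∑' n : ℕ, (cc 1 n : ℂ) * z ^ n) ^ (r + 1) = ∑' n : ℕ, (cc (r + 1) n : ℂ) * z ^ n := by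
  have h1 : Summable fun n : ℕ => ‖(cc 1 n : ℂ) * z ^ n‖ := by
    refine hz.congr fun n => ?_
    rw [abs_term]
  intro r
  induction r with
  | zero => exact ⟨h1, pow_one _⟩
  | succ r ih =>
    obtain ⟨hs, he⟩ := ih
    have key : ∀ n : ℕ, (∑ kl ∈ Finset.HasAntidiagonal.antidiagonal n,
        ((cc (r + 1) kl.1 : ℂ) * z ^ kl.1) * ((cc 1 kl.2 : ℂ) * z ^ kl.2))
        = (cc (r + 1 + 1) n : ℂ) * z ^ n := by
      intro n
      rw [Finset.Nat.sum_antidiagonal_eq_sum_range_succ_mk]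
      have hterm : ∀ k ∈ Finset.range (n + 1),
          ((cc (r + 1) k : ℂ) * z ^ k) * ((cc 1 (n - k) : ℂ) * z ^ (n - k))
            = ((cc (r + 1) k * cc 1 (n - k) : ℝ) : ℂ) * z ^ n := by
        intro k hk
        have hkn : k + (n - k) = n := by
          have := Finset.mem_range.mp hk; omega
        calc ((cc (r + 1) k : ℂ) * z ^ k) * ((cc 1 (n - k) : ℂ) * z ^ (n - k))
            = ((cc (r + 1) k * cc 1 (n - k) : ℝ) : ℂ) * z ^ (k + (n - k)) := by
              push_cast; ring
          _ = ((cc (r + 1) k * cc 1 (n - k) : ℝ) : ℂ) * z ^ n := by rw [hkn]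
      rw [Finset.sum_congr rfl hterm, ← Finset.sum_mul, ← Complex.ofReal_sum,
        cc_conv n (r + 1) 1]
    have hsum_new : Summable fun n : ℕ => ‖(cc (r + 1 + 1) n : ℂ) * z ^ n‖ := by
      have h := summable_norm_sum_mul_antidiagonal_of_summable_norm hs h1
      refine h.congr fun n => ?_
      rw [key n]
    have htsum : (∑' n : ℕ, (cc 1 n : ℂ) * z ^ n) ^ (r + 1 + 1)
        = ∑' n : ℕ, (cc (r + 1 + 1) n : ℂ) * z ^ n := by
      rw [pow_succ, he, tsum_mul_tsum_eq_tsum_sum_antidiagonal_of_summable_norm hs h1]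
      exact tsum_congr key
    exact ⟨hsum_new, htsum⟩

lemma func_eq (z : ℂ) (hz : Summable fun t : ℕ => cc 1 t * ‖z‖ ^ t) :
    (∑' n : ℕ, (cc 1 n : ℂ) * z ^ n)
      = 1 + z * (∑' n : ℕ, (cc 1 n : ℂ) * z ^ n) ^ 5 := by
  have h1 : Summable fun n : ℕ => ‖(cc 1 n : ℂ) * z ^ n‖ := by
    refine hz.congr fun n => ?_
    rw [abs_term]
  have h5 : (∑' n : ℕ, (cc 1 n : ℂ) * z ^ n) ^ 5 = ∑' n : ℕ, (cc 5 n : ℂ) * z ^ n := by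
    simpa using (pow_tsum z hz 4).2
  have hsum : Summable fun n : ℕ => (cc 1 n : ℂ) * z ^ n := h1.of_norm
  rw [h5, Summable.tsum_eq_zero_add hsum]
  have hshift : ∀ n : ℕ, (cc 1 (n + 1) : ℂ) * z ^ (n + 1) = z * ((cc 5 n : ℂ) * z ^ n) := by
    intro n
    have hp : cc 1 (n + 1) = cc 5 n := by
      have h := cc_pascal 0 n
      norm_num [cc_zero_succ] at h
      exact h
    rw [hp, pow_succ]; ring
  rw [tsum_congr hshift, tsum_mul_left, cc_zero_right]
  norm_num

lemma cc_one_eq (t : ℕ) : cc 1 t = ((5 * t).choose t : ℝ) / (4 * (t : ℝ) + 1) := by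
  rw [cc_pos_formula 1 t (Or.inl one_ne_zero),
    Nat.cast_choose ℝ (show t ≤ 5 * t + 1 by omega),
    Nat.cast_choose ℝ (show t ≤ 5 * t by omega)]
  have s1 : 5 * t + 1 - t = 4 * t + 1 := by omega
  have s2 : 5 * t - t = 4 * t := by omega
  rw [s1, s2]
  have f1 : (5 * t + 1)! = (5 * t + 1) * (5 * t)! := Nat.factorial_succ _
  have f2 : (4 * t + 1)! = (4 * t + 1) * (4 * t)! := Nat.factorial_succ _
  rw [f1, f2]
  push_cast
  have h1 : ((5 * t)! : ℝ) ≠ 0 := by positivity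
  have h2 : ((4 * t)! : ℝ) ≠ 0 := by positivity
  have h3 : ((t)! : ℝ) ≠ 0 := by positivity
  field_simp

/-- Fuss–Catalan number `A_t(5,1) = (1/(4t+1)) · C(5t, t)`, as a complex number. -/
noncomputable def fc5 (t : ℕ) : ℂ := (Nat.choose (5 * t) t : ℂ) / (4 * (t : ℂ) + 1)

lemma fc5_eq (t : ℕ) : fc5 t = ((cc 1 t : ℝ) : ℂ) := by
  rw [fc5, cc_one_eq]
  push_cast
  ring

/-- For `|γ| ≤ 4/5^{5/4}`, the series `x = ∑_t A_t(5,1) γ^{4t+1}` converges absolutely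
and its sum satisfies the Bring–Jerrard quintic `x^5 - x + γ = 0`. -/
theorem bring_jerrard_series (γ : ℂ)
    (hγ : ‖γ‖ ≤ 4 / (5 : ℝ) ^ ((5 : ℝ) / 4)) :
    Summable (fun t : ℕ => ‖fc5 t * γ ^ (4 * t + 1)‖) ∧
      (∑' t : ℕ, fc5 t * γ ^ (4 * t + 1)) ^ 5 - (∑' t : ℕ, fc5 t * γ ^ (4 * t + 1)) + γ
        = 0 := by
  have h4 : ‖γ ^ 4‖ ≤ 256 / 3125 := by
    rw [norm_pow]
    have h54 : ((5 : ℝ) ^ ((5 : ℝ) / 4)) ^ (4 : ℕ) = 3125 := by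
      rw [← Real.rpow_natCast ((5 : ℝ) ^ ((5 : ℝ) / 4)) 4,
        ← Real.rpow_mul (by norm_num : (0 : ℝ) ≤ 5)]
      rw [show (5 : ℝ) / 4 * (4 : ℕ) = ((5 : ℕ) : ℝ) by push_cast; ring,
        Real.rpow_natCast]
      norm_num
    calc ‖γ‖ ^ 4 ≤ (4 / (5 : ℝ) ^ ((5 : ℝ) / 4)) ^ 4 :=
          pow_le_pow_left₀ (norm_nonneg γ) hγ 4
      _ = 4 ^ 4 / ((5 : ℝ) ^ ((5 : ℝ) / 4)) ^ 4 := by rw [div_pow]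
      _ = 256 / 3125 := by rw [h54]; norm_num
  have hz : Summable fun t : ℕ => cc 1 t * ‖γ ^ 4‖ ^ t :=
    geom_summable _ (norm_nonneg _) h4
  have habs_eq : (fun t : ℕ => ‖fc5 t * γ ^ (4 * t + 1)‖)
      = fun t : ℕ => ‖γ‖ * (cc 1 t * ‖γ ^ 4‖ ^ t) := by
    funext t
    rw [fc5_eq, norm_mul, norm_pow, norm_pow, Complex.norm_real, Real.norm_eq_abs,
      abs_of_nonneg (cc_nonneg 1 t), pow_succ, ← pow_mul]
    ring
  constructor
  · rw [habs_eq]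
    exact hz.mul_left _
  · have key := func_eq (γ ^ 4) hz
    have hx : (∑' t : ℕ, fc5 t * γ ^ (4 * t + 1))
        = γ * ∑' n : ℕ, (cc 1 n : ℂ) * (γ ^ 4) ^ n := by
      rw [← tsum_mul_left]
      refine tsum_congr fun t => ?_
      rw [fc5_eq, pow_succ, ← pow_mul]
      ring
    rw [hx]
    set F := ∑' n : ℕ, (cc 1 n : ℂ) * (γ ^ 4) ^ n with hF
    linear_combination (-γ) * key
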